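/- Let a, ã, β₀ : Fin p → ℝ, W_j = |a_j| − |ã_j|, S₀ = {j : β₀_j ≠ 0}, s₀ = |S₀| ≥ 1, and assume the ℓ1-error bound Σ_{j=1}^p (|a_j − β₀_j| + |ã_j|) ≤ C_{ℓ1} λ s₀ with λ, κ, C_λ, C_{ℓ1} > 0. Let τ₊ > 0 be such that every j with W_j < 0 satisfies W_j ≤ −τ₊, and suppose #{j : W_j < 0} > φ C_{ℓ1} C_λ κ⁻¹ s₀, where φ = (1+√5)/2 is the golden ratio. Then τ₊ < κλ/(C_λ φ). -/

import Mathlib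

open Finset

/-- under the ℓ1-error bound, if `τ₊ > 0` is such that every `j` with
`W j < 0` satisfies `W j ≤ -τ₊`, and `#{j : W j < 0} > φ C_{ℓ1} C_λ κ⁻¹ s₀` with
`φ = (1+√5)/2` the golden ratio, then `τ₊ < κλ/(C_λ φ)`. -/
theorem threshold_small_when_many_negative
    {p : ℕ} (hp : 1 ≤ p) (a atk β₀ : Fin p → ℝ)
    (W : Fin p → ℝ) (hW : ∀ j, W j = |a j| - |atk j|)
    (S₀ : Finset (Fin p)) (hS₀ : S₀ = univ.filter fun j : Fin p => β₀ j ≠ 0)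
    (s₀ : ℝ) (hs₀ : s₀ = (S₀.card : ℝ)) (hs₀1 : 1 ≤ s₀)
    (lam κ Clam Cl1 : ℝ) (hlam : 0 < lam) (hκ : 0 < κ)
    (hClam : 0 < Clam) (hCl1 : 0 < Cl1)
    (hl1 : ∑ j, (|a j - β₀ j| + |atk j|) ≤ Cl1 * lam * s₀)
    (τ : ℝ) (hτ0 : 0 < τ)
    (hτneg : ∀ j : Fin p, W j < 0 → W j ≤ -τ)
    (hcount : ((1 + Real.sqrt 5) / 2) * Cl1 * Clam * κ⁻¹ * s₀ <
      ((univ.filter fun j : Fin p => W j < 0).card : ℝ)) :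
    τ < κ * lam / (Clam * ((1 + Real.sqrt 5) / 2)) := by
  set φ : ℝ := (1 + Real.sqrt 5) / 2 with hφ
  have hφpos : 0 < φ := by
    have h5 : (0:ℝ) ≤ Real.sqrt 5 := Real.sqrt_nonneg 5
    positivity
  set T := univ.filter fun j : Fin p => W j < 0 with hT
  set N : ℝ := (T.card : ℝ) with hN
  -- each j in T contributes at least τ
  have hstep : ∀ j ∈ T, τ ≤ |a j - β₀ j| + |atk j| := by
    intro j hj
    have hjneg : W j < 0 := (mem_filter.mp hj).2
    have := hτneg j hjneg
    rw [hW j] at this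
    have h1 : τ ≤ |atk j| - |a j| := by linarith
    have h2 : |a j| ≥ 0 := abs_nonneg _
    have h3 : |a j - β₀ j| ≥ 0 := abs_nonneg _
    linarith
  have hsum1 : N * τ ≤ ∑ j ∈ T, (|a j - β₀ j| + |atk j|) := by
    have := Finset.card_nsmul_le_sum T (fun j => |a j - β₀ j| + |atk j|) τ hstep
    simpa [hN, nsmul_eq_mul] using this
  have hsum2 : ∑ j ∈ T, (|a j - β₀ j| + |atk j|) ≤ ∑ j, (|a j - β₀ j| + |atk j|) :=
    Finset.sum_le_sum_of_subset_of_nonneg (Finset.subset_univ T)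
      (fun j _ _ => by positivity)
  have key : N * τ ≤ Cl1 * lam * s₀ := le_trans hsum1 (le_trans hsum2 hl1)
  have hB : 0 < φ * Cl1 * Clam * κ⁻¹ * s₀ := by positivity
  have hNpos : 0 < N := lt_trans hB hcount
  have hlt : τ * (φ * Cl1 * Clam * κ⁻¹ * s₀) < Cl1 * lam * s₀ := by
    calc τ * (φ * Cl1 * Clam * κ⁻¹ * s₀) < τ * N := by
          exact (mul_lt_mul_iff_right₀ hτ0).mpr hcount
      _ = N * τ := mul_comm _ _
      _ ≤ Cl1 * lam * s₀ := key
  have hs₀pos : 0 < s₀ := lt_of_lt_of_le one_pos hs₀1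
  rw [lt_div_iff₀ (by positivity)]
  have hκne : κ ≠ 0 := ne_of_gt hκ
  have h2 : τ * (Clam * φ) * (Cl1 * s₀) < κ * lam * (Cl1 * s₀) := by
    have e : τ * (Clam * φ) * (Cl1 * s₀) = (τ * (φ * Cl1 * Clam * κ⁻¹ * s₀)) * κ := by
      field_simp
    rw [e]
    calc (τ * (φ * Cl1 * Clam * κ⁻¹ * s₀)) * κ < (Cl1 * lam * s₀) * κ :=
          mul_lt_mul_of_pos_right hlt hκ
      _ = κ * lam * (Cl1 * s₀) := by ring
  exact lt_of_mul_lt_mul_right h2 (by positivity)
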